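/- arXiv:1705.06242 — 6 statements merged into one kernel-verified Lean document; each statement's English description precedes it below -/
import Mathlib

section
/- Let B be a finite collection of more than 2^d axis-aligned cubes in R^d with pairwise disjoint interiors. Suppose a set C of points contains at least one point from each cube of B. Define, for cubes B1 and B2, that B1 is i-below B2 if the maximum i-th coordinate of B1 is at most the minimum i-th coordinate of B2. Then there exist cubes B', B, B'' in the collection and an index i with B' i-below B and B i-below B''; consequently C contains two points at Euclidean distance at least size(B) from each other, where size(B) is the edge length of B. -/
/-- An axis-aligned cube in `ℝ^d` with lower corner `c` and edge length `s`. -/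
def cube {d : ℕ} (c : EuclideanSpace ℝ (Fin d)) (s : ℝ) : Set (EuclideanSpace ℝ (Fin d)) :=
  {x | ∀ i, c i ≤ x i ∧ x i ≤ c i + s}

lemma mem_interior_cube {d : ℕ} {c : EuclideanSpace ℝ (Fin d)} {s : ℝ}
    {x : EuclideanSpace ℝ (Fin d)} (h : ∀ i, c i < x i ∧ x i < c i + s) :
    x ∈ interior (cube c s) := by
  have hopen : IsOpen {y : EuclideanSpace ℝ (Fin d) | ∀ i, c i < y i ∧ y i < c i + s} := by
    have heq : {y : EuclideanSpace ℝ (Fin d) | ∀ i, c i < y i ∧ y i < c i + s}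
        = ⋂ i, ((fun y : EuclideanSpace ℝ (Fin d) => y i) ⁻¹' Set.Ioo (c i) (c i + s)) := by
      ext y; simp [Set.mem_iInter, Set.mem_Ioo]
    rw [heq]
    exact isOpen_iInter_of_finite fun i =>
      isOpen_Ioo.preimage ((continuous_apply i).comp (PiLp.continuous_ofLp 2 _))
  refine interior_maximal ?_ hopen h
  intro y hy i
  exact ⟨(hy i).1.le, (hy i).2.le⟩

lemma coord_abs_le_dist {d : ℕ} (p q : EuclideanSpace ℝ (Fin d)) (i : Fin d) :
    |p i - q i| ≤ dist p q := by
  rw [EuclideanSpace.dist_eq]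
  have h1 : |p i - q i| = Real.sqrt (dist (p i) (q i) ^ 2) := by
    rw [Real.dist_eq, Real.sqrt_sq_eq_abs, abs_abs]
  rw [h1]
  exact Real.sqrt_le_sqrt <| Finset.single_le_sum
    (f := fun i => dist (p i) (q i) ^ 2) (fun _ _ => sq_nonneg _) (Finset.mem_univ i)

lemma cubes_separated {d : ℕ} {c c' : EuclideanSpace ℝ (Fin d)} {s s' : ℝ}
    (hs : 0 < s) (hs' : 0 < s')
    (hdisj : Disjoint (interior (cube c s)) (interior (cube c' s')))
    : ∃ i, c i + s ≤ c' i ∨ c' i + s' ≤ c i := by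
  by_contra h
  push_neg at h
  set x : EuclideanSpace ℝ (Fin d) :=
    WithLp.toLp 2 (fun i => (max (c i) (c' i) + min (c i + s) (c' i + s')) / 2) with hx
  have hkey : ∀ i, max (c i) (c' i) < min (c i + s) (c' i + s') := by
    intro i
    obtain ⟨h1, h2⟩ := h i
    rcases max_cases (c i) (c' i) with ⟨he, _⟩ | ⟨he, _⟩ <;> rw [he] <;>
      exact lt_min (by linarith) (by linarith)
  have hx1 : x ∈ interior (cube c s) := by
    apply mem_interior_cube
    intro i
    constructor
    · have := hkey i
      have h2 : c i ≤ max (c i) (c' i) := le_max_left _ _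
      show c i < (max (c i) (c' i) + min (c i + s) (c' i + s')) / 2
      linarith
    · have := hkey i
      have h2 : min (c i + s) (c' i + s') ≤ c i + s := min_le_left _ _
      show (max (c i) (c' i) + min (c i + s) (c' i + s')) / 2 < c i + s
      linarith
  have hx2 : x ∈ interior (cube c' s') := by
    apply mem_interior_cube
    intro i
    constructor
    · have := hkey i
      have h2 : c' i ≤ max (c i) (c' i) := le_max_right _ _
      show c' i < (max (c i) (c' i) + min (c i + s) (c' i + s')) / 2
      linarith
    · have := hkey i
      have h2 : min (c i + s) (c' i + s') ≤ c' i + s' := min_le_right _ _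
      show (max (c i) (c' i) + min (c i + s) (c' i + s')) / 2 < c' i + s'
      linarith
  exact hdisj.ne_of_mem hx1 hx2 rfl

/-- Among more than `2^d` interior-disjoint axis-aligned cubes in `ℝ^d`,
if a set `C` contains a point in each cube, then there are cubes `B' ≺ᵢ B ≺ᵢ B''` for some
coordinate `i`, and consequently `C` contains two points at Euclidean distance at least
`size(B)` apart. -/
theorem three_stacked_cubes (d : ℕ) (ι : Type) [Fintype ι]
    (hcard : 2 ^ d < Fintype.card ι)
    (c : ι → EuclideanSpace ℝ (Fin d)) (s : ι → ℝ) (hs : ∀ j, 0 < s j)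
    (hdisj : Pairwise fun j j' =>
      Disjoint (interior (cube (c j) (s j))) (interior (cube (c j') (s j'))))
    (C : Set (EuclideanSpace ℝ (Fin d)))
    (hC : ∀ j, ∃ p ∈ C, p ∈ cube (c j) (s j)) :
    ∃ (j' j j'' : ι) (i : Fin d),
      (c j' i + s j' ≤ c j i) ∧ (c j i + s j ≤ c j'' i) ∧
      ∃ p ∈ C, ∃ q ∈ C, s j ≤ dist p q := by
  classical
  set φ : ι → (Fin d → Bool) := fun j i => decide (∃ j', c j' i + s j' ≤ c j i) with hφ
  have hcard' : Fintype.card (Fin d → Bool) < Fintype.card ι := by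
    simpa using hcard
  obtain ⟨a, b, hab, heq⟩ := Fintype.exists_ne_map_eq_of_card_lt φ hcard'
  -- main claim: given a ≺ᵢ b, produce the conclusion
  have main : ∀ a b : ι, φ a = φ b → ∀ i, c a i + s a ≤ c b i →
      ∃ (j' j j'' : ι) (i : Fin d),
        (c j' i + s j' ≤ c j i) ∧ (c j i + s j ≤ c j'' i) ∧
        ∃ p ∈ C, ∃ q ∈ C, s j ≤ dist p q := by
    intro a b hfeq i hi
    have hb : φ b i = true := by
      simp only [hφ, decide_eq_true_eq]
      exact ⟨a, hi⟩
    have ha : φ a i = true := by rw [hfeq]; exact hb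
    simp only [hφ, decide_eq_true_eq] at ha
    obtain ⟨j0, hj0⟩ := ha
    obtain ⟨p, hpC, hp⟩ := hC j0
    obtain ⟨q, hqC, hq⟩ := hC b
    refine ⟨j0, a, b, i, hj0, hi, p, hpC, q, hqC, ?_⟩
    have h1 : p i ≤ c j0 i + s j0 := (hp i).2
    have h2 : c b i ≤ q i := (hq i).1
    have h3 : s a ≤ q i - p i := by linarith
    have h4 : |q i - p i| ≤ dist p q := by
      rw [abs_sub_comm]; exact coord_abs_le_dist p q i
    exact (h3.trans (le_abs_self _)).trans h4
  obtain ⟨i, hi | hi⟩ := cubes_separated (hs a) (hs b) (hdisj hab)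
  · exact main a b heq i hi
  · exact main b a heq.symm i hi
end

section
/- Let cost be a (c, f(k))-regular cost function on clusterings of a finite point set, and let B be a cube cover of S = P ∩ Q with |B| > k·2^d. Then the optimal cost Opt_k(S) of a k-clustering of S satisfies Opt_k(S) >= c · min over B in B of size(B). -/
/-- A `k`-clustering of `S`: a partition of `S` into at most `k` nonempty parts. -/
def IsClustering {d : ℕ} (S : Finset (EuclideanSpace ℝ (Fin d))) (k : ℕ)
    (𝒞 : Finset (Finset (EuclideanSpace ℝ (Fin d)))) : Prop :=
  𝒞.card ≤ k ∧ (∀ C ∈ 𝒞, C.Nonempty ∧ C ⊆ S) ∧ (∀ p ∈ S, ∃ C ∈ 𝒞, p ∈ C) ∧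
  (∀ C ∈ 𝒞, ∀ C' ∈ 𝒞, C ≠ C' → ∀ p, p ∈ C → p ∉ C')

/-- The optimal cost of a `k`-clustering of `S` under cost function `cost`. -/
noncomputable def Opt {d : ℕ} (cost : Finset (Finset (EuclideanSpace ℝ (Fin d))) → ℝ)
    (k : ℕ) (S : Finset (EuclideanSpace ℝ (Fin d))) : ℝ :=
  sInf {x | ∃ 𝒞, IsClustering S k 𝒞 ∧ cost 𝒞 = x}

lemma coord_le_dist {d : ℕ} (x y : EuclideanSpace ℝ (Fin d)) (i : Fin d) :
    |x i - y i| ≤ dist x y := by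
  rw [EuclideanSpace.dist_eq, show |x i - y i| = Real.sqrt ((x i - y i)^2) by
    rw [Real.sqrt_sq_eq_abs]]
  apply Real.sqrt_le_sqrt
  have := Finset.single_le_sum (f := fun j => dist (x j) (y j) ^ 2)
    (fun j _ => sq_nonneg _) (Finset.mem_univ i)
  simpa [Real.dist_eq, sq_abs] using this

lemma isOpen_openBox {d : ℕ} (a : EuclideanSpace ℝ (Fin d)) (s : ℝ) :
    IsOpen {x : EuclideanSpace ℝ (Fin d) | ∀ i, a i < x i ∧ x i < a i + s} := by
  have h : {x : EuclideanSpace ℝ (Fin d) | ∀ i, a i < x i ∧ x i < a i + s}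
      = ⋂ i, ({x : EuclideanSpace ℝ (Fin d) | a i < x i} ∩ {x | x i < a i + s}) := by
    ext x; simp [Set.mem_iInter, forall_and]
  rw [h]
  refine isOpen_iInter_of_finite fun i => IsOpen.inter ?_ ?_
  · exact isOpen_lt continuous_const (EuclideanSpace.proj i).continuous
  · exact isOpen_lt (EuclideanSpace.proj i).continuous continuous_const

lemma interval_overlap (s0 a L a' L' x x' m : ℝ) (hs0 : 0 < s0)
    (hL : s0 ≤ L) (hL' : s0 ≤ L')
    (hxa : a ≤ x) (hxb : x ≤ a + L) (hx'a : a' ≤ x') (hx'b : x' ≤ a' + L')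
    (hm1 : m ≤ x) (hm2 : m ≤ x') (hd1 : x - m < s0) (hd2 : x' - m < s0)
    (hb : (m ≤ a) ↔ (m ≤ a')) :
    max a a' < min (a + L) (a' + L') := by
  have h1 : a' < a + L := by
    by_contra h; push_neg at h
    have hma' : m ≤ a' := by linarith
    have hna : ¬ (m ≤ a) := by intro hma; linarith
    exact hna (hb.mpr hma')
  have h2 : a < a' + L' := by
    by_contra h; push_neg at h
    have hma : m ≤ a := by linarith
    have hna : ¬ (m ≤ a') := by intro hma'; linarith
    exact hna (hb.mp hma)
  exact max_lt_iff.mpr ⟨lt_min_iff.mpr ⟨by linarith, h2⟩, lt_min_iff.mpr ⟨h1, by linarith⟩⟩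

/-- For a diameter-sensitive (regular) nonnegative cost function and
a cube cover `B` of `S` with `|B| > k·2^d`, one has `Opt_k(S) ≥ c · min_{B ∈ 𝓑} size(B)`. -/
theorem opt_lower_bound_from_cube_cover (d k : ℕ) (hk : 1 ≤ k) (c : ℝ) (hc : 0 < c)
    (cost : Finset (Finset (EuclideanSpace ℝ (Fin d))) → ℝ)
    (hcost0 : ∀ 𝒞, 0 ≤ cost 𝒞)
    (hsens : ∀ 𝒞 : Finset (Finset (EuclideanSpace ℝ (Fin d))),
      ∀ C ∈ 𝒞, ∀ p ∈ C, ∀ q ∈ C, c * dist p q ≤ cost 𝒞)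
    (S : Finset (EuclideanSpace ℝ (Fin d)))
    (ι : Type) [Fintype ι] (hcard : k * 2 ^ d < Fintype.card ι)
    (ctr : ι → EuclideanSpace ℝ (Fin d)) (s : ι → ℝ) (hs : ∀ j, 0 < s j)
    (hdisj : Pairwise fun j j' =>
      Disjoint (interior (cube (ctr j) (s j))) (interior (cube (ctr j') (s j'))))
    (hpt : ∀ j, ∃ p ∈ S, p ∈ cube (ctr j) (s j))
    (hcover : ∀ p ∈ S, ∃ j, p ∈ cube (ctr j) (s j)) :
    ∀ j0 : ι, (∀ j, s j0 ≤ s j) → c * s j0 ≤ Opt cost k S := by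
  intro j0 hj0
  have hs0 : 0 < s j0 := hs j0
  have hcardpos : 0 < Fintype.card ι := lt_of_le_of_lt (Nat.zero_le _) hcard
  obtain ⟨jw⟩ := Fintype.card_pos_iff.mp hcardpos
  obtain ⟨pw, hpwS, -⟩ := hpt jw
  have hSne : S.Nonempty := ⟨pw, hpwS⟩
  have hmain : ∀ 𝒞, IsClustering S k 𝒞 → c * s j0 ≤ cost 𝒞 := by
    intro 𝒞 h𝒞
    by_contra hlt
    push_neg at hlt
    obtain ⟨hck, hparts, hcov, hdisjC⟩ := h𝒞
    have hdist : ∀ C ∈ 𝒞, ∀ p ∈ C, ∀ q ∈ C, dist p q < s j0 := by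
      intro C hC p hp q hq
      exact (mul_lt_mul_iff_right₀ hc).mp (lt_of_le_of_lt (hsens 𝒞 C hC p hp q hq) hlt)
    choose p hpS hpcube using hpt
    choose Cl hClmem hpCl using fun j => hcov (p j) (hpS j)
    -- min coordinate of a cluster
    set m : Finset (EuclideanSpace ℝ (Fin d)) → Fin d → ℝ :=
      fun C i => if h : C.Nonempty then C.inf' h (fun q => q i) else 0 with hm
    have hmle : ∀ C (i : Fin d), ∀ q ∈ C, m C i ≤ q i := by
      intro C i q hq
      have hCne : C.Nonempty := ⟨q, hq⟩
      rw [hm]; simp only [dif_pos hCne]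
      exact Finset.inf'_le _ hq
    have hmmem : ∀ (C : Finset (EuclideanSpace ℝ (Fin d))) (hC : C.Nonempty) (i : Fin d),
        ∃ q ∈ C, m C i = q i := by
      intro C hC i
      rw [hm]; simp only [dif_pos hC]
      exact Finset.exists_mem_eq_inf' hC _
    -- pigeonhole
    set F : ι → {C // C ∈ 𝒞} × (Fin d → Bool) :=
      fun j => (⟨Cl j, hClmem j⟩, fun i => decide (m (Cl j) i ≤ ctr j i)) with hF
    have hcard2 : Fintype.card ({C // C ∈ 𝒞} × (Fin d → Bool)) < Fintype.card ι := by
      have : Fintype.card ({C // C ∈ 𝒞} × (Fin d → Bool)) = 𝒞.card * 2 ^ d := by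
        simp [Fintype.card_prod, Fintype.card_coe]
      rw [this]
      exact lt_of_le_of_lt (Nat.mul_le_mul_right _ hck) hcard
    obtain ⟨j, j', hne, hFeq⟩ := Fintype.exists_ne_map_eq_of_card_lt F hcard2
    have hCC : Cl j = Cl j' := Subtype.ext_iff.mp (congrArg Prod.fst hFeq)
    have hbit : ∀ i : Fin d, (m (Cl j) i ≤ ctr j i) ↔ (m (Cl j) i ≤ ctr j' i) := by
      intro i
      have h1 := congrFun (congrArg Prod.snd hFeq) i
      simp only [hF] at h1
      rw [← hCC] at h1
      exact decide_eq_decide.mp h1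
    have hpj' : p j' ∈ Cl j := by rw [hCC]; exact hpCl j'
    have hClne : (Cl j).Nonempty := ⟨p j, hpCl j⟩
    -- per-coordinate overlap
    have hover : ∀ i : Fin d,
        max (ctr j i) (ctr j' i) < min (ctr j i + s j) (ctr j' i + s j') := by
      intro i
      obtain ⟨q, hqC, hqm⟩ := hmmem (Cl j) hClne i
      have hd1 : p j i - m (Cl j) i < s j0 := by
        have h1 : p j i - q i ≤ |p j i - q i| := le_abs_self _
        have h2 := coord_le_dist (p j) q i
        have h3 := hdist (Cl j) (hClmem j) (p j) (hpCl j) q hqC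
        rw [hqm]; linarith
      have hd2 : p j' i - m (Cl j) i < s j0 := by
        have h1 : p j' i - q i ≤ |p j' i - q i| := le_abs_self _
        have h2 := coord_le_dist (p j') q i
        have h3 := hdist (Cl j) (hClmem j) (p j') hpj' q hqC
        rw [hqm]; linarith
      exact interval_overlap (s j0) (ctr j i) (s j) (ctr j' i) (s j')
        (p j i) (p j' i) (m (Cl j) i) hs0 (hj0 j) (hj0 j')
        (hpcube j i).1 (hpcube j i).2 (hpcube j' i).1 (hpcube j' i).2
        (hmle _ i _ (hpCl j)) (hmle _ i _ hpj') hd1 hd2 (hbit i)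
    -- common interior point
    set z : EuclideanSpace ℝ (Fin d) :=
      WithLp.toLp 2 (fun i => (max (ctr j i) (ctr j' i) + min (ctr j i + s j) (ctr j' i + s j')) / 2) with hz
    have hz1 : ∀ i, ctr j i < z i ∧ z i < ctr j i + s j := by
      intro i
      have h := hover i
      have h1 : ctr j i ≤ max (ctr j i) (ctr j' i) := le_max_left _ _
      have h2 : min (ctr j i + s j) (ctr j' i + s j') ≤ ctr j i + s j := min_le_left _ _
      constructor <;> [skip; skip] <;> (rw [hz]; simp only [PiLp.toLp_apply]) <;> [linarith; linarith]
    have hz2 : ∀ i, ctr j' i < z i ∧ z i < ctr j' i + s j' := by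
      intro i
      have h := hover i
      have h1 : ctr j' i ≤ max (ctr j i) (ctr j' i) := le_max_right _ _
      have h2 : min (ctr j i + s j) (ctr j' i + s j') ≤ ctr j' i + s j' := min_le_right _ _
      constructor <;> [skip; skip] <;> (rw [hz]; simp only [PiLp.toLp_apply]) <;> [linarith; linarith]
    have hsub1 : {x : EuclideanSpace ℝ (Fin d) | ∀ i, ctr j i < x i ∧ x i < ctr j i + s j}
        ⊆ interior (cube (ctr j) (s j)) := by
      apply interior_maximal
      · intro x hx i; exact ⟨(hx i).1.le, (hx i).2.le⟩
      · exact isOpen_openBox _ _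
    have hsub2 : {x : EuclideanSpace ℝ (Fin d) | ∀ i, ctr j' i < x i ∧ x i < ctr j' i + s j'}
        ⊆ interior (cube (ctr j') (s j')) := by
      apply interior_maximal
      · intro x hx i; exact ⟨(hx i).1.le, (hx i).2.le⟩
      · exact isOpen_openBox _ _
    exact Set.disjoint_left.mp (hdisj hne) (hsub1 hz1) (hsub2 hz2)
  have hne_set : {x | ∃ 𝒞, IsClustering S k 𝒞 ∧ cost 𝒞 = x}.Nonempty := by
    refine ⟨cost {S}, {S}, ⟨by simpa using hk, ?_, ?_, ?_⟩, rfl⟩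
    · intro C hC; simp only [Finset.mem_singleton] at hC; subst hC
      exact ⟨hSne, le_refl _⟩
    · intro q hq; exact ⟨S, Finset.mem_singleton_self _, hq⟩
    · intro C hC C' hC' hCC'
      simp only [Finset.mem_singleton] at hC hC'
      subst hC; subst hC'; exact absurd rfl hCC'
  apply le_csInf hne_set
  rintro x ⟨𝒞, h𝒞, rfl⟩
  exact hmain 𝒞 h𝒞
end

section
/- Let S be a finite set of points in R contained in an interval Q = [x, x'] with x, x' ∈ S, and let k >= 2. Let s_1, ..., s_{k-1} be the points partitioning Q into k equal-length subintervals. Then at least one s_i is a fair split point: there exists an optimal covering of S by at most k intervals of equal minimal length L = Opt_k(S) such that s_i is not in the interior of any of the intervals, and exactly i of the intervals lie to the left of s_i. -/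
/-- The minimum length `L` such that `S ⊂ ℝ` can be covered by (at most) `k`
closed intervals of length `L`. -/
noncomputable def OptLen (k : ℕ) (S : Finset ℝ) : ℝ :=
  sInf {L | 0 ≤ L ∧ ∃ t : Fin k → ℝ, ∀ p ∈ S, ∃ j, t j ≤ p ∧ p ≤ t j + L}

lemma optlen_bddBelow (k : ℕ) (S : Finset ℝ) :
    BddBelow {L | 0 ≤ L ∧ ∃ t : Fin k → ℝ, ∀ p ∈ S, ∃ j, t j ≤ p ∧ p ≤ t j + L} :=
  ⟨0, fun _ h => h.1⟩

/-- cost of an assignment -/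
noncomputable def cost {k : ℕ} {S : Finset ℝ} (hne : S.Nonempty) (f : {y // y ∈ S} → Fin k) : ℝ :=
  Finset.univ.sup' (by
    obtain ⟨p, hp⟩ := hne
    exact ⟨(⟨p, hp⟩, ⟨p, hp⟩), Finset.mem_univ _⟩)
    (fun pq : {y // y ∈ S} × {y // y ∈ S} =>
      if f pq.1 = f pq.2 then (pq.2 : ℝ) - (pq.1 : ℝ) else 0)

lemma cost_nonneg {k : ℕ} {S : Finset ℝ} (hne : S.Nonempty) (f : {y // y ∈ S} → Fin k) :
    0 ≤ cost hne f := by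
  obtain ⟨p, hp⟩ := hne
  have := Finset.le_sup' (f := fun pq : {y // y ∈ S} × {y // y ∈ S} =>
      if f pq.1 = f pq.2 then (pq.2 : ℝ) - (pq.1 : ℝ) else 0)
    (Finset.mem_univ ((⟨p, hp⟩ : {y // y ∈ S}), (⟨p, hp⟩ : {y // y ∈ S})))
  exact le_trans (by simp) this

lemma cost_mem {k : ℕ} {S : Finset ℝ} (hne : S.Nonempty) (f : {y // y ∈ S} → Fin k) :
    cost hne f ∈ {L | 0 ≤ L ∧ ∃ t : Fin k → ℝ, ∀ p ∈ S, ∃ j, t j ≤ p ∧ p ≤ t j + L} := by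
  classical
  refine ⟨cost_nonneg hne f, ?_⟩
  refine ⟨fun j => if h : (Finset.univ.filter (fun p => f p = j)).Nonempty
      then (Finset.univ.filter (fun p => f p = j)).inf' h (fun p => (p : ℝ)) else hne.choose, ?_⟩
  intro p hp
  refine ⟨f ⟨p, hp⟩, ?_, ?_⟩
  · have hne' : (Finset.univ.filter (fun q => f q = f ⟨p, hp⟩)).Nonempty :=
      ⟨⟨p, hp⟩, by simp⟩
    simp only [dif_pos hne']
    have hmem : (⟨p, hp⟩ : {y // y ∈ S}) ∈ Finset.univ.filter (fun q => f q = f ⟨p, hp⟩) :=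
      Finset.mem_filter.mpr ⟨Finset.mem_univ _, rfl⟩
    exact Finset.inf'_le _ hmem
  · have hne' : (Finset.univ.filter (fun q => f q = f ⟨p, hp⟩)).Nonempty :=
      ⟨⟨p, hp⟩, by simp⟩
    simp only [dif_pos hne']
    obtain ⟨q, hq, hq2⟩ := Finset.exists_mem_eq_inf' hne' (fun p => (p : ℝ))
    rw [hq2]
    have hfq : f q = f ⟨p, hp⟩ := (Finset.mem_filter.mp hq).2
    have := Finset.le_sup' (f := fun pq : {y // y ∈ S} × {y // y ∈ S} =>
        if f pq.1 = f pq.2 then (pq.2 : ℝ) - (pq.1 : ℝ) else 0)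
      (Finset.mem_univ ((q, (⟨p, hp⟩ : {y // y ∈ S}))))
    simp only [hfq, if_pos rfl] at this
    have : (p : ℝ) - (q : ℝ) ≤ cost hne f := this
    linarith

lemma exists_cost_le {k : ℕ} {S : Finset ℝ} (hne : S.Nonempty) {L : ℝ}
    (hL : L ∈ {L | 0 ≤ L ∧ ∃ t : Fin k → ℝ, ∀ p ∈ S, ∃ j, t j ≤ p ∧ p ≤ t j + L}) :
    ∃ f : {y // y ∈ S} → Fin k, cost hne f ≤ L := by
  classical
  obtain ⟨hL0, t, ht⟩ := hL
  choose g hg1 hg2 using fun (p : {y // y ∈ S}) => ht p p.2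
  refine ⟨g, ?_⟩
  apply Finset.sup'_le
  rintro ⟨p, q⟩ -
  dsimp only
  split_ifs with h
  · have h1 := hg1 p
    have h2 := hg2 q
    rw [h] at h1
    linarith
  · exact hL0

lemma optLen_spec (k : ℕ) (hk : 0 < k) (S : Finset ℝ) (hne : S.Nonempty) :
    0 ≤ OptLen k S ∧ ∃ t : Fin k → ℝ, ∀ p ∈ S, ∃ j, t j ≤ p ∧ p ≤ t j + OptLen k S := by
  classical
  haveI : NeZero k := ⟨hk.ne'⟩
  have hfne : (Finset.univ : Finset ({y // y ∈ S} → Fin k)).Nonempty := Finset.univ_nonempty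
  set Lmin := Finset.univ.inf' hfne (cost (k := k) hne) with hLmin
  obtain ⟨f0, -, hf0⟩ := Finset.exists_mem_eq_inf' hfne (cost (k := k) hne)
  have hmem : Lmin ∈ {L | 0 ≤ L ∧ ∃ t : Fin k → ℝ, ∀ p ∈ S, ∃ j, t j ≤ p ∧ p ≤ t j + L} := by
    rw [hLmin, hf0]; exact cost_mem hne f0
  have heq : OptLen k S = Lmin := by
    apply le_antisymm
    · exact csInf_le (optlen_bddBelow k S) hmem
    · apply le_csInf ⟨Lmin, hmem⟩
      intro L hL
      obtain ⟨f, hf⟩ := exists_cost_le hne hL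
      exact le_trans (Finset.inf'_le _ (Finset.mem_univ f)) hf
  rw [heq]
  exact ⟨hmem.1, hmem.2⟩

lemma optLen_le {k : ℕ} {S : Finset ℝ} {L : ℝ}
    (hL : L ∈ {L | 0 ≤ L ∧ ∃ t : Fin k → ℝ, ∀ p ∈ S, ∃ j, t j ≤ p ∧ p ≤ t j + L}) :
    OptLen k S ≤ L := csInf_le (optlen_bddBelow k S) hL

noncomputable def greedy (S : Finset ℝ) (x x' L : ℝ) : ℕ → ℝ
  | 0 => x
  | (j+1) =>
      if h : ((S.filter (fun p => greedy S x x' L j + L < p)).Nonempty)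
      then (S.filter (fun p => greedy S x x' L j + L < p)).min' h
      else max (greedy S x x' L j) x' + L + 1

variable {S : Finset ℝ} {x x' L : ℝ}

lemma greedy_step (hL : 0 ≤ L) (j : ℕ) :
    greedy S x x' L j + L < greedy S x x' L (j+1) := by
  rw [greedy]
  split_ifs with h
  · have := (S.filter (fun p => greedy S x x' L j + L < p)).min'_mem h
    exact (Finset.mem_filter.mp this).2
  · have : greedy S x x' L j ≤ max (greedy S x x' L j) x' := le_max_left _ _
    linarith

lemma greedy_strictMono (hL : 0 ≤ L) : StrictMono (greedy S x x' L) := by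
  apply strictMono_nat_of_lt_succ
  intro j
  have := greedy_step (S := S) (x := x) (x' := x') hL j
  linarith

lemma greedy_gap (hL : 0 ≤ L) {a b : ℕ} (hab : a < b) :
    greedy S x x' L a + L < greedy S x x' L b := by
  calc greedy S x x' L a + L < greedy S x x' L (a+1) := greedy_step hL a
    _ ≤ greedy S x x' L b := (greedy_strictMono hL).monotone hab

lemma greedy_mem (hL : 0 ≤ L) (hx : x ∈ S) (j : ℕ) :
    greedy S x x' L j ∈ S ∨ x' < greedy S x x' L j := by
  cases j with
  | zero => exact Or.inl hx
  | succ j =>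
    rw [greedy]
    split_ifs with h
    · exact Or.inl (Finset.mem_filter.mp ((S.filter _).min'_mem h)).1
    · right
      have : x' ≤ max (greedy S x x' L j) x' := le_max_right _ _
      linarith

lemma greedy_exceeds (hL : 0 ≤ L) (hx : x ∈ S) :
    ∃ j0 ≤ S.card, x' < greedy S x x' L j0 := by
  by_contra hcon
  push_neg at hcon
  have hmapsto : ∀ j ∈ Finset.range (S.card + 1), greedy S x x' L j ∈ S := by
    intro j hj
    rcases greedy_mem (x' := x') hL hx j with h | h
    · exact h
    · exact absurd h (not_lt.mpr (hcon j (Nat.lt_succ_iff.mp (Finset.mem_range.mp hj))))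
  have hinj : Set.InjOn (greedy S x x' L) (Finset.range (S.card + 1)) :=
    ((greedy_strictMono hL).injective).injOn
  have := Finset.card_le_card_of_injOn _ hmapsto hinj
  simp at this

lemma greedy_covers (hL : 0 ≤ L) (hx : x ∈ S) {p : ℝ} (hp : p ∈ S) (hxp : x ≤ p) (hpx : p ≤ x') :
    ∃ j, greedy S x x' L j ≤ p ∧ p ≤ greedy S x x' L j + L := by
  obtain ⟨j0, -, hj0⟩ := greedy_exceeds (L := L) hL hx
  have h0T : (0 : ℕ) ∈ (Finset.range (j0 + 1)).filter (fun j => greedy S x x' L j ≤ p) := by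
    refine Finset.mem_filter.mpr ⟨Finset.mem_range.mpr (Nat.succ_pos _), ?_⟩
    simpa [greedy] using hxp
  set T := (Finset.range (j0 + 1)).filter (fun j => greedy S x x' L j ≤ p) with hT
  have hTne : T.Nonempty := ⟨0, h0T⟩
  set j := T.max' hTne with hj
  have hjT : j ∈ T := T.max'_mem hTne
  have hjle : greedy S x x' L j ≤ p := (Finset.mem_filter.mp hjT).2
  refine ⟨j, hjle, ?_⟩
  by_contra hcon
  push_neg at hcon
  have hfil : p ∈ S.filter (fun q => greedy S x x' L j + L < q) :=
    Finset.mem_filter.mpr ⟨hp, hcon⟩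
  have hnext : greedy S x x' L (j+1) ≤ p := by
    rw [greedy, dif_pos ⟨p, hfil⟩]
    exact Finset.min'_le _ _ hfil
  have hjne : j ≠ j0 := by
    intro he
    rw [he] at hjle
    linarith
  have hjlt : j < j0 := lt_of_le_of_ne (Nat.lt_succ_iff.mp (Finset.mem_range.mp (Finset.mem_filter.mp hjT).1)) hjne
  have : (j+1) ∈ T := Finset.mem_filter.mpr ⟨Finset.mem_range.mpr (Nat.succ_lt_succ hjlt), hnext⟩
  have := Finset.le_max' T _ this
  omega

lemma greedy_lt_k {k : ℕ} (hL : 0 ≤ L) (hx : x ∈ S)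
    (t : Fin k → ℝ) (ht : ∀ p ∈ S, ∃ c, t c ≤ p ∧ p ≤ t c + L)
    (hS : ∀ p ∈ S, x ≤ p ∧ p ≤ x')
    {j : ℕ} (hj : greedy S x x' L j ≤ x') : j < k := by
  classical
  have hmem : ∀ a : ℕ, a ≤ j → greedy S x x' L a ∈ S := by
    intro a ha
    rcases greedy_mem (x' := x') hL hx a with h | h
    · exact h
    · exact absurd ((greedy_strictMono hL).monotone ha) (not_le.mpr (lt_of_le_of_lt hj h))
  choose σ hσ1 hσ2 using fun (a : Fin (j+1)) => ht _ (hmem a (Nat.lt_succ_iff.mp a.2))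
  have key : ∀ a b : Fin (j+1), (a : ℕ) < (b : ℕ) → σ a ≠ σ b := by
    intro a b hlt hab
    have h1 := hσ1 a
    have h2 := hσ2 b
    rw [hab] at h1
    have := greedy_gap (S := S) (x := x) (x' := x') hL hlt
    linarith
  have hinj : Function.Injective σ := by
    intro a b hab
    rcases lt_trichotomy (a : ℕ) (b : ℕ) with h | h | h
    · exact absurd hab (key a b h)
    · exact Fin.ext h
    · exact absurd hab.symm (key b a h)
  have := Fintype.card_le_of_injective σ hinj
  simpa using this

lemma tiling_covers {k : ℕ} (hk : 0 < k) {x x' : ℝ} (hxx : x < x') {p : ℝ}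
    (hxp : x ≤ p) (hpx : p ≤ x') :
    ∃ j : Fin k, x + (j : ℝ) * ((x' - x) / k) ≤ p ∧
      p ≤ x + (j : ℝ) * ((x' - x) / k) + (x' - x) / k := by
  set d := (x' - x) / k with hd
  have hk' : (0 : ℝ) < k := by exact_mod_cast hk
  have hdpos : 0 < d := div_pos (by linarith) hk'
  have hkd : x + (k : ℝ) * d = x' := by
    rw [hd, mul_div_assoc', mul_div_cancel_left₀ _ hk'.ne']; ring
  set y := (p - x) / d with hy
  have hy0 : 0 ≤ y := div_nonneg (by linarith) hdpos.le
  have hyd : y * d = p - x := div_mul_cancel₀ _ hdpos.ne'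
  set n := (⌊y⌋).toNat with hn
  have hfl : ((n : ℝ)) = ((⌊y⌋ : ℤ) : ℝ) := by
    rw [hn]
    exact_mod_cast congrArg (fun z : ℤ => (z : ℝ)) (Int.toNat_of_nonneg (Int.floor_nonneg.mpr hy0))
  by_cases hnk : n < k
  · refine ⟨⟨n, hnk⟩, ?_, ?_⟩
    · have h2 : (n : ℝ) ≤ y := by rw [hfl]; exact Int.floor_le y
      have : (n : ℝ) * d ≤ y * d := mul_le_mul_of_nonneg_right h2 hdpos.le
      simp only [Fin.val_mk]
      linarith [hyd]
    · have h2 : y < (n : ℝ) + 1 := by rw [hfl]; exact Int.lt_floor_add_one y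
      have : y * d < ((n : ℝ) + 1) * d := mul_lt_mul_of_pos_right h2 hdpos
      simp only [Fin.val_mk]
      nlinarith [hyd]
  · push_neg at hnk
    have hkn : (k : ℝ) ≤ (n : ℝ) := by exact_mod_cast hnk
    have h2 : (n : ℝ) ≤ y := by rw [hfl]; exact Int.floor_le y
    have : (k : ℝ) * d ≤ y * d := mul_le_mul_of_nonneg_right (le_trans hkn h2) hdpos.le
    have hpeq : p = x' := le_antisymm hpx (by linarith [hyd])
    refine ⟨⟨k - 1, by omega⟩, ?_, ?_⟩
    · have hc : ((k - 1 : ℕ) : ℝ) = (k : ℝ) - 1 := by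
        have : (1 : ℕ) ≤ k := hk
        push_cast [Nat.cast_sub this]
        ring
      simp only [Fin.val_mk]
      rw [hc, hpeq]
      nlinarith
    · have hc : ((k - 1 : ℕ) : ℝ) = (k : ℝ) - 1 := by
        have : (1 : ℕ) ≤ k := hk
        push_cast [Nat.cast_sub this]
        ring
      simp only [Fin.val_mk]
      rw [hc, hpeq]
      nlinarith

lemma exists_good {k : ℕ} (hk : 2 ≤ k) (hL : 0 ≤ L) (hx : x ∈ S) (hx' : x' ∈ S)
    (hS : ∀ p ∈ S, x ≤ p ∧ p ≤ x')
    (t : Fin k → ℝ) (ht : ∀ p ∈ S, ∃ c, t c ≤ p ∧ p ≤ t c + L)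
    (hLd : L < (x' - x) / k) :
    ∃ i : ℕ, 1 ≤ i ∧ i ≤ k - 1 ∧
      greedy S x x' L (i - 1) + L ≤ x + (i : ℝ) * ((x' - x) / k) ∧
      x + (i : ℝ) * ((x' - x) / k) < greedy S x x' L i := by
  set d := (x' - x) / k with hd
  have hk' : (0 : ℝ) < k := by positivity
  have hdpos : 0 < d := lt_of_le_of_lt hL hLd
  have hkd : x + (k : ℝ) * d = x' := by rw [hd, mul_div_assoc', mul_div_cancel_left₀ _ hk'.ne']; ring
  by_contra hcon
  push_neg at hcon
  have key : ∀ i : ℕ, i ≤ k - 1 → greedy S x x' L i ≤ x + (i : ℝ) * d := by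
    intro i
    induction i with
    | zero => intro _; simp [greedy]
    | succ n ih =>
      intro hn1
      have hgn := ih (by omega)
      apply hcon (n + 1) (by omega) hn1
      have : ((n + 1 : ℕ) : ℝ) = (n : ℝ) + 1 := by push_cast; ring
      rw [this]
      simp only [Nat.add_sub_cancel]
      nlinarith
  obtain ⟨j, hj1, hj2⟩ := greedy_covers (x' := x') hL hx hx' (hS x' hx').1 (hS x' hx').2
  have hjk : j < k := greedy_lt_k hL hx t ht hS (le_trans hj1 le_rfl)
  have hmono : greedy S x x' L j ≤ greedy S x x' L (k - 1) :=
    (greedy_strictMono hL).monotone (by omega)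
  have hkey := key (k - 1) le_rfl
  have hc : ((k - 1 : ℕ) : ℝ) = (k : ℝ) - 1 := by
    have : (1 : ℕ) ≤ k := by omega
    push_cast [Nat.cast_sub this]
    ring
  rw [hc] at hkey
  nlinarith

lemma natCard_subtype_fin_lt {k i : ℕ} (hik : i ≤ k) (P : Fin k → Prop)
    (hP : ∀ j, P j ↔ (j : ℕ) < i) :
    Nat.card {j : Fin k // P j} = i := by
  have e1 : {j : Fin k // P j} ≃ {j : Fin k // (j : ℕ) < i} :=
    Equiv.subtypeEquivRight (fun j => hP j)
  have e2 : {j : Fin k // (j : ℕ) < i} ≃ Fin i :=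
    { toFun := fun j => ⟨j.1, j.2⟩
      invFun := fun a => ⟨⟨a.1, lt_of_lt_of_le a.2 hik⟩, a.2⟩
      left_inv := fun j => by ext; rfl
      right_inv := fun a => rfl }
  rw [Nat.card_congr (e1.trans e2), Nat.card_eq_fintype_card, Fintype.card_fin]

/-- **fair split point lemma.** Let `S ⊂ [x, x']` with `x, x' ∈ S`, and
let `s_i = x + i(x'-x)/k` be the points partitioning `[x, x']` into `k` equal parts.
Then some `s_i` (`1 ≤ i ≤ k-1`) is a fair split point: there is an optimal covering
of `S` by `k` intervals of length `OptLen k S` such that `s_i` lies in the interior of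
no interval and exactly `i` of the intervals lie in `[x, s_i]`. -/
theorem fair_split_point (k : ℕ) (hk : 2 ≤ k) (S : Finset ℝ) (x x' : ℝ)
    (hx : x ∈ S) (hx' : x' ∈ S) (hS : ∀ p ∈ S, x ≤ p ∧ p ≤ x') :
    ∃ i : ℕ, 1 ≤ i ∧ i ≤ k - 1 ∧
      ∃ t : Fin k → ℝ,
        (∀ p ∈ S, ∃ j, t j ≤ p ∧ p ≤ t j + OptLen k S) ∧
        (∀ j : Fin k,
          ¬ (t j < x + i * (x' - x) / k ∧ x + i * (x' - x) / k < t j + OptLen k S)) ∧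
        Nat.card {j : Fin k // x ≤ t j ∧ t j + OptLen k S ≤ x + i * (x' - x) / k} = i := by
  classical
  have hk0 : 0 < k := by omega
  haveI : NeZero k := ⟨by omega⟩
  have hxx' : x ≤ x' := (hS x' hx').1
  obtain ⟨hL0, t0, ht0⟩ := optLen_spec k hk0 S ⟨x, hx⟩
  rcases eq_or_lt_of_le hxx' with heq | hlt
  · -- degenerate case x = x'
    have hLz : OptLen k S = 0 := by
      refine le_antisymm ?_ hL0
      apply optLen_le
      refine ⟨le_refl 0, fun _ => x, fun p hp => ⟨0, ?_, ?_⟩⟩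
      · exact (hS p hp).1
      · show p ≤ x + 0
        rw [add_zero, heq]
        exact (hS p hp).2
    have hs : x + ((1 : ℕ) : ℝ) * (x' - x) / (k : ℝ) = x := by
      rw [← heq]; simp
    refine ⟨1, le_rfl, by omega, fun j => if j = (0 : Fin k) then x else x - 1, ?_, ?_, ?_⟩
    · intro p hp
      have hpx : p = x := le_antisymm (heq ▸ (hS p hp).2) (hS p hp).1
      exact ⟨0, by simp [hpx], by simp [hpx, hLz]⟩
    · intro j
      rintro ⟨h1, h2⟩
      rw [hs] at h1 h2
      rw [hLz, add_zero] at h2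
      dsimp only at h1 h2
      split_ifs at h1 h2 <;> linarith
    · refine natCard_subtype_fin_lt (by omega) _ (fun j => ?_)
      rw [hs, hLz, add_zero]
      dsimp only
      constructor
      · rintro ⟨h1, h2⟩
        by_contra hj
        have hjne : j ≠ 0 := by
          intro h; rw [h] at hj; simp at hj
        rw [if_neg hjne] at h1
        linarith
      · intro hj
        have hj0 : j = 0 := by
          apply Fin.ext
          simp [Nat.lt_one_iff.mp hj]
        rw [if_pos hj0]
        exact ⟨le_rfl, le_rfl⟩
  · -- main case x < x'
    have hk' : (0 : ℝ) < k := by positivity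
    have hdpos : 0 < (x' - x) / (k : ℝ) := div_pos (by linarith) hk'
    have hLd : OptLen k S ≤ (x' - x) / (k : ℝ) := by
      apply optLen_le
      refine ⟨hdpos.le, fun j : Fin k => x + (j : ℝ) * ((x' - x) / (k : ℝ)), fun p hp => ?_⟩
      obtain ⟨j, h1, h2⟩ := tiling_covers hk0 hlt (hS p hp).1 (hS p hp).2
      exact ⟨j, h1, h2⟩
    set L := OptLen k S with hdefL
    rcases lt_or_eq_of_le hLd with hLlt | hLeq
    · -- greedy case
      obtain ⟨i, hi1, hi2, hgood1, hgood2⟩ := exists_good hk hL0 hx hx' hS t0 ht0 hLlt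
      have hsi : x + (i : ℝ) * (x' - x) / (k : ℝ) = x + (i : ℝ) * ((x' - x) / (k : ℝ)) := by
        ring
      have hg0 : greedy S x x' L 0 = x := rfl
      refine ⟨i, hi1, hi2, fun j : Fin k => greedy S x x' L (j : ℕ), ?_, ?_, ?_⟩
      · intro p hp
        obtain ⟨j, hj1, hj2⟩ := greedy_covers hL0 hx hp (hS p hp).1 (hS p hp).2
        have hjk : j < k := greedy_lt_k hL0 hx t0 ht0 hS (le_trans hj1 (hS p hp).2)
        exact ⟨⟨j, hjk⟩, hj1, hj2⟩
      · intro j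
        rw [hsi]
        rintro ⟨h1, h2⟩
        dsimp only at h1 h2
        by_cases hji : (j : ℕ) < i
        · have hm : greedy S x x' L (j : ℕ) ≤ greedy S x x' L (i - 1) :=
            (greedy_strictMono hL0).monotone (by omega)
          linarith
        · push_neg at hji
          have hm : greedy S x x' L i ≤ greedy S x x' L (j : ℕ) :=
            (greedy_strictMono hL0).monotone hji
          linarith
      · refine natCard_subtype_fin_lt (by omega) _ (fun j => ?_)
        rw [hsi]
        dsimp only
        constructor
        · rintro ⟨h1, h2⟩
          by_contra hji
          push_neg at hji
          have hm : greedy S x x' L i ≤ greedy S x x' L (j : ℕ) :=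
            (greedy_strictMono hL0).monotone hji
          linarith
        · intro hji
          constructor
          · rw [← hg0]
            exact (greedy_strictMono hL0).monotone (Nat.zero_le _)
          · have hm : greedy S x x' L (j : ℕ) ≤ greedy S x x' L (i - 1) :=
              (greedy_strictMono hL0).monotone (by omega)
            linarith
    · -- tiling case L = d
      have hs1 : x + ((1 : ℕ) : ℝ) * (x' - x) / (k : ℝ) = x + (x' - x) / (k : ℝ) := by
        push_cast; ring
      refine ⟨1, le_rfl, by omega,
        fun j : Fin k => x + (j : ℝ) * ((x' - x) / (k : ℝ)), ?_, ?_, ?_⟩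
      · intro p hp
        obtain ⟨j, h1, h2⟩ := tiling_covers hk0 hlt (hS p hp).1 (hS p hp).2
        refine ⟨j, h1, ?_⟩
        dsimp only
        rw [hLeq]
        exact h2
      · intro j
        rw [hs1, hLeq]
        rintro ⟨h1, h2⟩
        dsimp only at h1 h2
        have hj2 : ((j : ℕ) : ℝ) < 1 := by
          by_contra hc
          push_neg at hc
          nlinarith
        have hj0 : ((j : ℕ) : ℝ) = 0 := by
          have h3 : (j : ℕ) < 1 := by exact_mod_cast hj2
          have h4 : (j : ℕ) = 0 := by omega
          rw [h4]; simp
        rw [hj0] at h2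
        nlinarith
      · refine natCard_subtype_fin_lt (by omega) _ (fun j => ?_)
        rw [hs1, hLeq]
        dsimp only
        constructor
        · rintro ⟨h1, h2⟩
          have hjd : (0 : ℝ) ≤ ((j : ℕ) : ℝ) * ((x' - x) / (k : ℝ)) := by positivity
          have hj2 : ((j : ℕ) : ℝ) * ((x' - x) / (k : ℝ)) = 0 := by linarith
          have hj3 : ((j : ℕ) : ℝ) = 0 := by
            rcases mul_eq_zero.mp hj2 with h | h
            · exact h
            · exact absurd h hdpos.ne'
          have : (j : ℕ) = 0 := by exact_mod_cast hj3
          omega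
        · intro hji
          have hj0 : ((j : ℕ) : ℝ) = 0 := by
            have h4 : (j : ℕ) = 0 := by omega
            rw [h4]; simp
          rw [hj0]
          constructor <;> nlinarith
end

section
/- Let Q be an axis-aligned rectangle in R^2 whose every edge contains at least one point of a finite set S ⊆ Q. If σ and σ' are two congruent axis-aligned squares of minimum size whose union covers S, then each of σ and σ' can be taken to share a corner with Q, and these corners are opposite corners of Q. -/
/-- The axis-aligned square in `ℝ²` with bottom-left corner `a` and side length `L`. -/
def square (a : ℝ × ℝ) (L : ℝ) : Set (ℝ × ℝ) :=
  {p | a.1 ≤ p.1 ∧ p.1 ≤ a.1 + L ∧ a.2 ≤ p.2 ∧ p.2 ≤ a.2 + L}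

/-- The minimum side length of two congruent axis-aligned squares covering `S`. -/
noncomputable def opt2 (S : Finset (ℝ × ℝ)) : ℝ :=
  sInf {L | 0 ≤ L ∧ ∃ a a' : ℝ × ℝ, ∀ p ∈ S, p ∈ square a L ∨ p ∈ square a' L}

/-- If each edge of the rectangle `Q = [x1,x2] × [y1,y2]` contains a
point of `S ⊆ Q`, then there is an optimal covering of `S` by two congruent squares
anchored at opposite corners of `Q`: either topleft/bottomright or bottomleft/topright. -/
theorem two_center_anchored (S : Finset (ℝ × ℝ)) (x1 x2 y1 y2 : ℝ)
    (hx : x1 ≤ x2) (hy : y1 ≤ y2)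
    (hS : ∀ p ∈ S, x1 ≤ p.1 ∧ p.1 ≤ x2 ∧ y1 ≤ p.2 ∧ p.2 ≤ y2)
    (hleft : ∃ p ∈ S, p.1 = x1) (hright : ∃ p ∈ S, p.1 = x2)
    (hbottom : ∃ p ∈ S, p.2 = y1) (htop : ∃ p ∈ S, p.2 = y2) :
    (∀ p ∈ S, p ∈ square (x1, y2 - opt2 S) (opt2 S) ∨ p ∈ square (x2 - opt2 S, y1) (opt2 S)) ∨
    (∀ p ∈ S, p ∈ square (x1, y1) (opt2 S) ∨ p ∈ square (x2 - opt2 S, y2 - opt2 S) (opt2 S)) := by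
  obtain ⟨pl, hplS, hplx⟩ := hleft
  obtain ⟨pr, hprS, hprx⟩ := hright
  obtain ⟨pb, hpbS, hpby⟩ := hbottom
  obtain ⟨pt, hptS, hpty⟩ := htop
  have key : ∀ L : ℝ, ∀ a a' : ℝ × ℝ, (∀ p ∈ S, p ∈ square a L ∨ p ∈ square a' L) →
      (∀ p ∈ S, p ∈ square (x1, y2 - L) L ∨ p ∈ square (x2 - L, y1) L) ∨
      (∀ p ∈ S, p ∈ square (x1, y1) L ∨ p ∈ square (x2 - L, y2 - L) L) := by
    intro L a a' hcov
    have hl := hcov pl hplS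
    have hr := hcov pr hprS
    have hb := hcov pb hpbS
    have ht := hcov pt hptS
    simp only [square, Set.mem_setOf_eq] at hl hr hb ht
    rw [hplx] at hl; rw [hprx] at hr; rw [hpby] at hb; rw [hpty] at ht
    obtain ⟨hl1, hl2, -, -⟩ | ⟨hl1, hl2, -, -⟩ := hl <;>
    obtain ⟨hr1, hr2, -, -⟩ | ⟨hr1, hr2, -, -⟩ := hr <;>
    obtain ⟨-, -, hb1, hb2⟩ | ⟨-, -, hb1, hb2⟩ := hb <;>
    obtain ⟨-, -, ht1, ht2⟩ | ⟨-, -, ht1, ht2⟩ := ht <;>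
    first
      | (left
         intro p hpS
         obtain ⟨g1, g2, g3, g4⟩ := hS p hpS
         obtain ⟨q1, q2, q3, q4⟩ | ⟨q1, q2, q3, q4⟩ := hcov p hpS <;>
           simp only [square, Set.mem_setOf_eq] <;>
           first
             | (left; refine ⟨?_, ?_, ?_, ?_⟩ <;> linarith)
             | (right; refine ⟨?_, ?_, ?_, ?_⟩ <;> linarith))
      | (right
         intro p hpS
         obtain ⟨g1, g2, g3, g4⟩ := hS p hpS
         obtain ⟨q1, q2, q3, q4⟩ | ⟨q1, q2, q3, q4⟩ := hcov p hpS <;>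
           simp only [square, Set.mem_setOf_eq] <;>
           first
             | (left; refine ⟨?_, ?_, ?_, ?_⟩ <;> linarith)
             | (right; refine ⟨?_, ?_, ?_, ?_⟩ <;> linarith))
  set T : Set ℝ :=
    {L | 0 ≤ L ∧ ∃ a a' : ℝ × ℝ, ∀ p ∈ S, p ∈ square a L ∨ p ∈ square a' L} with hTdef
  have hopt : opt2 S = sInf T := rfl
  have hTne : T.Nonempty := by
    refine ⟨max (x2 - x1) (y2 - y1), ?_, (x1, y1), (x1, y1), fun p hp => Or.inl ?_⟩
    · have := le_max_left (x2 - x1) (y2 - y1); linarith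
    · obtain ⟨g1, g2, g3, g4⟩ := hS p hp
      have h1 := le_max_left (x2 - x1) (y2 - y1)
      have h2 := le_max_right (x2 - x1) (y2 - y1)
      exact ⟨g1, by linarith, g3, by linarith⟩
  have hTbdd : BddBelow T := ⟨0, fun L hL => hL.1⟩
  rw [hopt]
  by_contra hcon
  push_neg at hcon
  obtain ⟨⟨p, hpS, hp1, hp2⟩, ⟨q, hqS, hq1, hq2⟩⟩ := hcon
  obtain ⟨gp1, gp2, gp3, gp4⟩ := hS p hpS
  obtain ⟨gq1, gq2, gq3, gq4⟩ := hS q hqS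
  simp only [square, Set.mem_setOf_eq] at hp1 hp2 hq1 hq2
  have m1 : sInf T < max (p.1 - x1) (y2 - p.2) := by
    by_contra h; push_neg at h; rw [max_le_iff] at h
    exact hp1 ⟨by simpa using gp1, by linarith [h.1],
      by linarith [h.2], by linarith⟩
  have m2 : sInf T < max (x2 - p.1) (p.2 - y1) := by
    by_contra h; push_neg at h; rw [max_le_iff] at h
    exact hp2 ⟨by linarith [h.1], by linarith,
      by simpa using gp3, by linarith [h.2]⟩
  have m3 : sInf T < max (q.1 - x1) (q.2 - y1) := by
    by_contra h; push_neg at h; rw [max_le_iff] at h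
    exact hq1 ⟨by simpa using gq1, by linarith [h.1],
      by simpa using gq3, by linarith [h.2]⟩
  have m4 : sInf T < max (x2 - q.1) (y2 - q.2) := by
    by_contra h; push_neg at h; rw [max_le_iff] at h
    exact hq2 ⟨by linarith [h.1], by linarith,
      by linarith [h.2], by linarith⟩
  obtain ⟨L, hLT, hLc⟩ := (csInf_lt_iff hTbdd hTne).mp
    (show sInf T < min (min (max (p.1 - x1) (y2 - p.2)) (max (x2 - p.1) (p.2 - y1)))
        (min (max (q.1 - x1) (q.2 - y1)) (max (x2 - q.1) (y2 - q.2))) by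
      simp only [lt_min_iff]; exact ⟨⟨m1, m2⟩, ⟨m3, m4⟩⟩)
  simp only [lt_min_iff] at hLc
  obtain ⟨⟨c1, c2⟩, c3, c4⟩ := hLc
  obtain ⟨-, a, a', hcov⟩ := hLT
  rcases key L a a' hcov with hA | hB
  · obtain ⟨e1, e2, e3, e4⟩ | ⟨e1, e2, e3, e4⟩ := hA p hpS
    · dsimp only at e1 e2 e3 e4; rcases lt_max_iff.mp c1 with h | h <;> linarith
    · dsimp only at e1 e2 e3 e4; rcases lt_max_iff.mp c2 with h | h <;> linarith
  · obtain ⟨e1, e2, e3, e4⟩ | ⟨e1, e2, e3, e4⟩ := hB q hqS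
    · dsimp only at e1 e2 e3 e4; rcases lt_max_iff.mp c3 with h | h <;> linarith
    · dsimp only at e1 e2 e3 e4; rcases lt_max_iff.mp c4 with h | h <;> linarith
end

section
/- Let Q be an axis-aligned rectangle each of whose edges contains a point of the finite set S ⊆ Q ⊂ R^2. In any optimal covering of S by three congruent axis-aligned squares of minimum side length contained appropriately, at least one of the three squares can be assumed to be anchored at (share) one of the four corners of Q. -/
/-- The minimum side length of three congruent axis-aligned squares covering `S`. -/
noncomputable def opt3 (S : Finset (ℝ × ℝ)) : ℝ :=
  sInf {L | 0 ≤ L ∧ ∃ a1 a2 a3 : ℝ × ℝ, ∀ p ∈ S, p ∈ square a1 L ∨ p ∈ square a2 L ∨ p ∈ square a3 L}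



namespace ThreeCenterAux

/-- Chebyshev distance on the plane. -/
noncomputable def cheb (c p : ℝ × ℝ) : ℝ := max |p.1 - c.1| |p.2 - c.2|

lemma cheb_nonneg (c p : ℝ × ℝ) : 0 ≤ cheb c p :=
  le_trans (abs_nonneg _) (le_max_left _ _)

lemma mem_square_iff_cheb {a p : ℝ × ℝ} {L : ℝ} :
    p ∈ square a L ↔ cheb (a.1 + L/2, a.2 + L/2) p ≤ L/2 := by
  simp only [square, Set.mem_setOf_eq, cheb, max_le_iff, abs_le]
  constructor
  · rintro ⟨h1, h2, h3, h4⟩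
    exact ⟨⟨by linarith, by linarith⟩, ⟨by linarith, by linarith⟩⟩
  · rintro ⟨⟨h1, h2⟩, h3, h4⟩
    exact ⟨by linarith, by linarith, by linarith, by linarith⟩

lemma abs_clamp_le {l u a b : ℝ} (hl : l ≤ a) (hu : a ≤ u) :
    |a - max l (min b u)| ≤ |a - b| := by
  rcases le_total b l with h | h
  · have hbu : b ≤ u := le_trans h (le_trans hl hu)
    rw [min_eq_left hbu, max_eq_left h, abs_of_nonneg (by linarith),
      abs_of_nonneg (by linarith)]
    linarith
  · rcases le_total b u with h2 | h2
    · rw [min_eq_left h2, max_eq_right h]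
    · rw [min_eq_right h2, max_eq_right (le_trans hl hu), abs_of_nonpos (by linarith),
        abs_of_nonpos (by linarith)]
      linarith

lemma continuous_finset_sup' {ι X : Type*} [TopologicalSpace X] {s : Finset ι} (hs : s.Nonempty)
    (f : ι → X → ℝ) (hf : ∀ i, Continuous (f i)) :
    Continuous fun x => s.sup' hs fun i => f i x := by
  induction hs using Finset.Nonempty.cons_induction with
  | singleton a => simp only [Finset.sup'_singleton]; exact hf a
  | cons a s h hs ih =>
      simp only [Finset.sup'_cons hs]
      exact (hf a).max ih

lemma fin3_cases (i j : Fin 3) : j = i ∨ j = i + 1 ∨ j = i + 2 := by revert i j; decide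

/-- Attainment of the infimum: there is a covering with squares of side `opt3 S`. -/
lemma exists_min_cover (S : Finset (ℝ × ℝ)) (hne : S.Nonempty) :
    ∃ a : Fin 3 → ℝ × ℝ, ∀ p ∈ S, ∃ i, p ∈ square (a i) (opt3 S) := by
  set lx := S.inf' hne (fun p => p.1) with hlx
  set ux := S.sup' hne (fun p => p.1) with hux
  set ly := S.inf' hne (fun p => p.2) with hly
  set uy := S.sup' hne (fun p => p.2) with huy
  have hb : ∀ p ∈ S, lx ≤ p.1 ∧ p.1 ≤ ux ∧ ly ≤ p.2 ∧ p.2 ≤ uy := fun p hp =>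
    ⟨Finset.inf'_le _ hp, Finset.le_sup' _ hp, Finset.inf'_le _ hp, Finset.le_sup' _ hp⟩
  obtain ⟨p0, hp0⟩ := id hne
  have hlu : lx ≤ ux := le_trans (hb p0 hp0).1 (hb p0 hp0).2.1
  have hlu' : ly ≤ uy := le_trans (hb p0 hp0).2.2.1 (hb p0 hp0).2.2.2
  set B : Set (ℝ × ℝ) := Set.Icc (lx, ly) (ux, uy) with hB
  set K : Set ((ℝ × ℝ) × (ℝ × ℝ) × (ℝ × ℝ)) := B ×ˢ (B ×ˢ B) with hK
  set F : ((ℝ × ℝ) × (ℝ × ℝ) × (ℝ × ℝ)) → ℝ :=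
    fun c => S.sup' hne fun p => min (cheb c.1 p) (min (cheb c.2.1 p) (cheb c.2.2 p)) with hF
  have hFc : Continuous F := by
    apply continuous_finset_sup' hne
    intro p
    unfold cheb
    fun_prop
  have hBmem : (lx, ly) ∈ B := by
    simp only [hB, Set.mem_Icc, Prod.mk_le_mk]
    exact ⟨⟨le_refl _, le_refl _⟩, hlu, hlu'⟩
  have hKc : IsCompact K := (isCompact_Icc).prod ((isCompact_Icc).prod isCompact_Icc)
  have hKne : K.Nonempty := ⟨((lx, ly), (lx, ly), (lx, ly)), hBmem, hBmem, hBmem⟩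
  obtain ⟨c, hcK, hcmin⟩ := hKc.exists_isMinOn hKne hFc.continuousOn
  set m := F c with hm
  have hm0 : 0 ≤ m := by
    refine le_trans ?_ (Finset.le_sup' _ hp0)
    exact le_min (cheb_nonneg _ _) (le_min (cheb_nonneg _ _) (cheb_nonneg _ _))
  -- clamping gives global minimality
  have hclampB : ∀ q : ℝ × ℝ, (max lx (min q.1 ux), max ly (min q.2 uy)) ∈ B := by
    intro q
    simp only [hB, Set.mem_Icc, Prod.mk_le_mk]
    exact ⟨⟨le_max_left _ _, le_max_left _ _⟩,
      max_le hlu (min_le_right _ _), max_le hlu' (min_le_right _ _)⟩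
  have hchebcl : ∀ (q : ℝ × ℝ) (p : ℝ × ℝ), p ∈ S →
      cheb (max lx (min q.1 ux), max ly (min q.2 uy)) p ≤ cheb q p := by
    intro q p hp
    obtain ⟨h1, h2, h3, h4⟩ := hb p hp
    exact max_le_max (abs_clamp_le h1 h2) (abs_clamp_le h3 h4)
  have hglobal : ∀ c', m ≤ F c' := by
    intro c'
    set cl : (ℝ × ℝ) → (ℝ × ℝ) := fun q => (max lx (min q.1 ux), max ly (min q.2 uy)) with hcl
    have h1 : m ≤ F (cl c'.1, cl c'.2.1, cl c'.2.2) :=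
      hcmin ⟨hclampB _, hclampB _, hclampB _⟩
    refine le_trans h1 (Finset.sup'_mono_fun fun p hp => ?_)
    exact min_le_min (hchebcl _ p hp)
      (min_le_min (hchebcl _ p hp) (hchebcl _ p hp))
  -- the covering set equals Ici (2*m)
  have hset : {L | 0 ≤ L ∧ ∃ a1 a2 a3 : ℝ × ℝ, ∀ p ∈ S,
      p ∈ square a1 L ∨ p ∈ square a2 L ∨ p ∈ square a3 L} = Set.Ici (2 * m) := by
    ext L
    simp only [Set.mem_setOf_eq, Set.mem_Ici]
    constructor
    · rintro ⟨hL0, a1, a2, a3, hcov⟩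
      set c' : ((ℝ × ℝ) × (ℝ × ℝ) × (ℝ × ℝ)) :=
        ((a1.1 + L/2, a1.2 + L/2), (a2.1 + L/2, a2.2 + L/2), (a3.1 + L/2, a3.2 + L/2)) with hc'
      have hF' : F c' ≤ L / 2 := by
        apply Finset.sup'_le
        intro p hp
        rcases hcov p hp with h | h | h
        · exact le_trans (min_le_left _ _) (mem_square_iff_cheb.mp h)
        · exact le_trans (le_trans (min_le_right _ _) (min_le_left _ _))
            (mem_square_iff_cheb.mp h)
        · exact le_trans (le_trans (min_le_right _ _) (min_le_right _ _))
            (mem_square_iff_cheb.mp h)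
      have := le_trans (hglobal c') hF'
      linarith
    · intro hL
      have hL0 : 0 ≤ L := by linarith
      refine ⟨hL0, (c.1.1 - L/2, c.1.2 - L/2), (c.2.1.1 - L/2, c.2.1.2 - L/2),
        (c.2.2.1 - L/2, c.2.2.2 - L/2), fun p hp => ?_⟩
      have hmin : min (cheb c.1 p) (min (cheb c.2.1 p) (cheb c.2.2 p)) ≤ L / 2 :=
        le_trans (Finset.le_sup' (fun p => min (cheb c.1 p) (min (cheb c.2.1 p) (cheb c.2.2 p))) hp) (by linarith)
      have hcenter : ∀ q : ℝ × ℝ, ((q.1 - L/2 : ℝ) + L/2, (q.2 - L/2 : ℝ) + L/2) = q := by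
        intro q; simp
      rcases min_le_iff.mp hmin with h | h
      · left; rw [mem_square_iff_cheb]; simpa [hcenter c.1] using h
      · rcases min_le_iff.mp h with h' | h'
        · right; left; rw [mem_square_iff_cheb]; simpa [hcenter c.2.1] using h'
        · right; right; rw [mem_square_iff_cheb]; simpa [hcenter c.2.2] using h'
  have hopt : opt3 S = 2 * m := by
    rw [opt3, hset, csInf_Ici]
  -- the cover at L = 2*m
  have h2m : (2 * m : ℝ) ∈ Set.Ici (2 * m) := Set.self_mem_Ici
  rw [← hset] at h2m
  obtain ⟨_, a1, a2, a3, hcov⟩ := h2m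
  refine ⟨![a1, a2, a3], fun p hp => ?_⟩
  rw [hopt]
  rcases hcov p hp with h | h | h
  · exact ⟨0, h⟩
  · exact ⟨1, h⟩
  · exact ⟨2, h⟩


lemma fin3_pigeon (i j k l : Fin 3) (h1 : k ≠ i) (h2 : l ≠ i) (h3 : k ≠ j) (h4 : l ≠ j)
    (h5 : j ≠ i) : k = l := by
  have v1 : k.val ≠ i.val := fun h => h1 (Fin.ext h)
  have v2 : l.val ≠ i.val := fun h => h2 (Fin.ext h)
  have v3 : k.val ≠ j.val := fun h => h3 (Fin.ext h)
  have v4 : l.val ≠ j.val := fun h => h4 (Fin.ext h)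
  have v5 : j.val ≠ i.val := fun h => h5 (Fin.ext h)
  have b1 := i.isLt; have b2 := j.isLt; have b3 := k.isLt; have b4 := l.isLt
  exact Fin.ext (by omega)

end ThreeCenterAux

/-- If each edge of the rectangle `Q = [x1,x2] × [y1,y2]` contains a
point of `S ⊆ Q`, then there is an optimal covering of `S` by three congruent squares
in which at least one square is anchored at (shares) one of the four corners of `Q`. -/
theorem three_center_anchored (S : Finset (ℝ × ℝ)) (x1 x2 y1 y2 : ℝ)
    (hx : x1 ≤ x2) (hy : y1 ≤ y2)
    (hS : ∀ p ∈ S, x1 ≤ p.1 ∧ p.1 ≤ x2 ∧ y1 ≤ p.2 ∧ p.2 ≤ y2)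
    (hleft : ∃ p ∈ S, p.1 = x1) (hright : ∃ p ∈ S, p.1 = x2)
    (hbottom : ∃ p ∈ S, p.2 = y1) (htop : ∃ p ∈ S, p.2 = y2) :
    ∃ a1 a2 a3 : ℝ × ℝ,
      (∀ p ∈ S, p ∈ square a1 (opt3 S) ∨ p ∈ square a2 (opt3 S) ∨ p ∈ square a3 (opt3 S)) ∧
      (a1 = (x1, y1) ∨ a1 = (x1, y2 - opt3 S) ∨
        a1 = (x2 - opt3 S, y1) ∨ a1 = (x2 - opt3 S, y2 - opt3 S)) := by
  obtain ⟨pl, hplS, hpl⟩ := hleft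
  obtain ⟨pr, hprS, hpr⟩ := hright
  obtain ⟨pb, hpbS, hpb⟩ := hbottom
  obtain ⟨pt, hptS, hpt⟩ := htop
  have hne : S.Nonempty := ⟨pl, hplS⟩
  obtain ⟨a, hcov⟩ := ThreeCenterAux.exists_min_cover S hne
  set L := opt3 S with hLdef
  obtain ⟨il, hil⟩ := hcov pl hplS
  obtain ⟨ir, hir⟩ := hcov pr hprS
  obtain ⟨ib, hib⟩ := hcov pb hpbS
  obtain ⟨it, hit⟩ := hcov pt hptS
  simp only [square, Set.mem_setOf_eq] at hil hir hib hit
  rw [hpl] at hil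
  rw [hpr] at hir
  rw [hpb] at hib
  rw [hpt] at hit
  -- key facts about the extreme squares
  have hL1 : (a il).1 ≤ x1 := hil.1
  have hR1 : x2 ≤ (a ir).1 + L := hir.2.1
  have hB2 : (a ib).2 ≤ y1 := hib.2.2.1
  have hT2 : y2 ≤ (a it).2 + L := hit.2.2.2
  -- replacement principle
  have key : ∀ (i : Fin 3) (b : ℝ × ℝ),
      (b = (x1, y1) ∨ b = (x1, y2 - L) ∨ b = (x2 - L, y1) ∨ b = (x2 - L, y2 - L)) →
      (∀ p ∈ S, p ∈ square (a i) L → p ∈ square b L) →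
      ∃ a1 a2 a3 : ℝ × ℝ,
        (∀ p ∈ S, p ∈ square a1 L ∨ p ∈ square a2 L ∨ p ∈ square a3 L) ∧
        (a1 = (x1, y1) ∨ a1 = (x1, y2 - L) ∨ a1 = (x2 - L, y1) ∨ a1 = (x2 - L, y2 - L)) := by
    intro i b hb hrep
    refine ⟨b, a (i + 1), a (i + 2), fun p hp => ?_, hb⟩
    obtain ⟨j, hj⟩ := hcov p hp
    rcases ThreeCenterAux.fin3_cases i j with rfl | rfl | rfl
    · exact Or.inl (hrep p hp hj)
    · exact Or.inr (Or.inl hj)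
    · exact Or.inr (Or.inr hj)
  by_cases hbl : ib = il
  · -- left & bottom share a square : anchor at (x1, y1)
    rw [hbl] at hB2
    refine key il (x1, y1) (Or.inl rfl) fun p hp hpin => ?_
    obtain ⟨q1, q2, q3, q4⟩ := hpin
    obtain ⟨s1, s2, s3, s4⟩ := hS p hp
    simp only [square, Set.mem_setOf_eq]
    exact ⟨s1, by linarith, s3, by linarith⟩
  by_cases htl : it = il
  · -- left & top : anchor at (x1, y2 - L)
    rw [htl] at hT2
    refine key il (x1, y2 - L) (Or.inr (Or.inl rfl)) fun p hp hpin => ?_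
    obtain ⟨q1, q2, q3, q4⟩ := hpin
    obtain ⟨s1, s2, s3, s4⟩ := hS p hp
    simp only [square, Set.mem_setOf_eq]
    exact ⟨s1, by linarith, by linarith, by linarith⟩
  by_cases hbr : ib = ir
  · -- right & bottom : anchor at (x2 - L, y1)
    rw [hbr] at hB2
    refine key ir (x2 - L, y1) (Or.inr (Or.inr (Or.inl rfl))) fun p hp hpin => ?_
    obtain ⟨q1, q2, q3, q4⟩ := hpin
    obtain ⟨s1, s2, s3, s4⟩ := hS p hp
    simp only [square, Set.mem_setOf_eq]
    exact ⟨by linarith, by linarith, s3, by linarith⟩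
  by_cases htr : it = ir
  · -- right & top : anchor at (x2 - L, y2 - L)
    rw [htr] at hT2
    refine key ir (x2 - L, y2 - L) (Or.inr (Or.inr (Or.inr rfl))) fun p hp hpin => ?_
    obtain ⟨q1, q2, q3, q4⟩ := hpin
    obtain ⟨s1, s2, s3, s4⟩ := hS p hp
    simp only [square, Set.mem_setOf_eq]
    exact ⟨by linarith, by linarith, by linarith, by linarith⟩
  by_cases hlr : ir = il
  · -- left & right share a square : L ≥ x2 - x1; anchor the bottom square at (x1, y1)
    rw [hlr] at hR1
    have hwide : x2 - x1 ≤ L := by linarith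
    refine key ib (x1, y1) (Or.inl rfl) fun p hp hpin => ?_
    obtain ⟨q1, q2, q3, q4⟩ := hpin
    obtain ⟨s1, s2, s3, s4⟩ := hS p hp
    simp only [square, Set.mem_setOf_eq]
    exact ⟨s1, by linarith, s3, by linarith⟩
  · -- bottom & top share a square : L ≥ y2 - y1; anchor the left square at (x1, y1)
    have hbt : ib = it := ThreeCenterAux.fin3_pigeon il ir ib it hbl htl hbr htr hlr
    rw [hbt] at hB2
    have htall : y2 - y1 ≤ L := by linarith
    refine key il (x1, y1) (Or.inl rfl) fun p hp hpin => ?_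
    obtain ⟨q1, q2, q3, q4⟩ := hpin
    obtain ⟨s1, s2, s3, s4⟩ := hS p hp
    simp only [square, Set.mem_setOf_eq]
    exact ⟨s1, by linarith, s3, by linarith⟩
end

section
/- Capacity bound in the capacitated clustering query: suppose a cluster C_i is a union of point sets S_Q ∩ σ over a family R_i of at most 8k^2 pairwise disjoint axis-aligned rectangles, where A_Q is a δ_Q-approximation of S_Q with δ_Q = δ/(16k^3), Σ_{σ ∈ R_i} |A_Q ∩ σ| <= U with U = (1 + δ/2)·α·|A_Q|/k, and α >= 1, 0 < δ. Then |C_i| <= (1 + δ)·α·|S_Q|/k. -/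
/-- The axis-aligned rectangle in `ℝ²` with corners `a` and `b`. -/
def Rect (a b : EuclideanSpace ℝ (Fin 2)) : Set (EuclideanSpace ℝ (Fin 2)) :=
  {p | ∀ i, a i ≤ p i ∧ p i ≤ b i}

/-- `A` is a `δ`-approximation of `P` with respect to axis-aligned rectangles. -/
def IsApprox (P A : Set (EuclideanSpace ℝ (Fin 2))) (δ : ℝ) : Prop :=
  A ⊆ P ∧ ∀ a b : EuclideanSpace ℝ (Fin 2),
    |((P ∩ Rect a b).ncard : ℝ) / P.ncard - ((A ∩ Rect a b).ncard : ℝ) / A.ncard| ≤ δ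

/-- Capacity bound in the capacitated clustering query: if the
cluster `C_i` is the union of `S_Q ∩ σ` over at most `8k²` pairwise disjoint
rectangles `σ`, `A_Q` is a `δ/(16k³)`-approximation of `S_Q`, and
`Σ_σ |A_Q ∩ σ| ≤ (1 + δ/2)·α·|A_Q|/k` with `α ≥ 1`, `δ > 0`, then
`|C_i| ≤ (1 + δ)·α·|S_Q|/k`. -/
theorem capacitated_cluster_bound (k : ℕ) (hk : 2 ≤ k) (δ α : ℝ)
    (hδ : 0 < δ) (hα : 1 ≤ α)
    (SQ AQ : Set (EuclideanSpace ℝ (Fin 2)))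
    (hfin : SQ.Finite) (hSne : SQ.Nonempty) (hAne : AQ.Nonempty)
    (happrox : IsApprox SQ AQ (δ / (16 * k ^ 3)))
    (ι : Type) [Fintype ι] (hm : Fintype.card ι ≤ 8 * k ^ 2)
    (a b : ι → EuclideanSpace ℝ (Fin 2))
    (hdisj : Pairwise fun j j' => Disjoint (Rect (a j) (b j)) (Rect (a j') (b j')))
    (hU : ∑ j, ((AQ ∩ Rect (a j) (b j)).ncard : ℝ) ≤ (1 + δ / 2) * α * AQ.ncard / k) :
    ((SQ ∩ ⋃ j, Rect (a j) (b j)).ncard : ℝ) ≤ (1 + δ) * α * SQ.ncard / k := by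
  classical
  have hAfin : AQ.Finite := hfin.subset happrox.1
  set n : ℝ := (SQ.ncard : ℝ)
  set m : ℝ := (AQ.ncard : ℝ)
  have hn : 0 < n := by
    have h := hSne.ncard_pos hfin
    simp only [n]; exact_mod_cast h
  have hmpos : 0 < m := by
    have h := hAne.ncard_pos hAfin
    simp only [m]; exact_mod_cast h
  have hk0 : (0:ℝ) < k := by positivity
  -- split the union
  have hsplit : (SQ ∩ ⋃ j, Rect (a j) (b j)).ncard
      = ∑ j, (SQ ∩ Rect (a j) (b j)).ncard := by
    have hfj : ∀ j, (SQ ∩ Rect (a j) (b j)).Finite := fun j => hfin.inter_of_left _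
    have hEq : SQ ∩ ⋃ j, Rect (a j) (b j) = ⋃ j, (SQ ∩ Rect (a j) (b j)) :=
      Set.inter_iUnion _ _
    rw [hEq]
    have hufin : (⋃ j, (SQ ∩ Rect (a j) (b j))).Finite := Set.finite_iUnion hfj
    have htf : hufin.toFinset = Finset.univ.biUnion fun j => (hfj j).toFinset := by
      ext x; simp
    rw [Set.ncard_eq_toFinset_card _ hufin, htf, Finset.card_biUnion]
    · exact Finset.sum_congr rfl fun j _ => by
        rw [Set.ncard_eq_toFinset_card _ (hfj j)]
    · intro i _ j _ hij
      have hd : Disjoint (SQ ∩ Rect (a i) (b i)) (SQ ∩ Rect (a j) (b j)) :=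
        (hdisj hij).mono Set.inter_subset_right Set.inter_subset_right
      rw [Function.onFun, Finset.disjoint_left]
      intro x hxi hxj
      simp only [Set.Finite.mem_toFinset] at hxi hxj
      exact (Set.disjoint_left.1 hd) hxi hxj
  rw [hsplit, Nat.cast_sum]
  have key : ∀ j, ((SQ ∩ Rect (a j) (b j)).ncard : ℝ)
      ≤ n * (((AQ ∩ Rect (a j) (b j)).ncard : ℝ) / m + δ / (16 * k ^ 3)) := by
    intro j
    have h := (abs_le.1 (happrox.2 (a j) (b j))).2
    have h2 : ((SQ ∩ Rect (a j) (b j)).ncard : ℝ) / n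
        ≤ ((AQ ∩ Rect (a j) (b j)).ncard : ℝ) / m + δ / (16 * k ^ 3) := by linarith
    calc ((SQ ∩ Rect (a j) (b j)).ncard : ℝ)
        = n * (((SQ ∩ Rect (a j) (b j)).ncard : ℝ) / n) := by field_simp
      _ ≤ _ := mul_le_mul_of_nonneg_left h2 hn.le
  have hsum : ∑ j, ((SQ ∩ Rect (a j) (b j)).ncard : ℝ)
      ≤ n * ((∑ j, ((AQ ∩ Rect (a j) (b j)).ncard : ℝ)) / m
          + (Fintype.card ι : ℝ) * (δ / (16 * k ^ 3))) := by
    calc ∑ j, ((SQ ∩ Rect (a j) (b j)).ncard : ℝ)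
        ≤ ∑ j, n * (((AQ ∩ Rect (a j) (b j)).ncard : ℝ) / m + δ / (16 * k ^ 3)) :=
          Finset.sum_le_sum fun j _ => key j
      _ = n * ((∑ j, ((AQ ∩ Rect (a j) (b j)).ncard : ℝ)) / m
          + (Fintype.card ι : ℝ) * (δ / (16 * k ^ 3))) := by
          rw [← Finset.mul_sum, Finset.sum_add_distrib, ← Finset.sum_div,
            Finset.sum_const, Finset.card_univ, nsmul_eq_mul]
  have hA : (∑ j, ((AQ ∩ Rect (a j) (b j)).ncard : ℝ)) / m ≤ (1 + δ / 2) * α / k := by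
    rw [div_le_iff₀ hmpos]
    calc ∑ j, ((AQ ∩ Rect (a j) (b j)).ncard : ℝ) ≤ (1 + δ / 2) * α * m / k := hU
      _ = (1 + δ / 2) * α / k * m := by ring
  have hcard : (Fintype.card ι : ℝ) * (δ / (16 * k ^ 3)) ≤ δ / (2 * k) := by
    have h1 : (Fintype.card ι : ℝ) ≤ 8 * (k:ℝ) ^ 2 := by exact_mod_cast hm
    have h2 : (8 : ℝ) * (k:ℝ) ^ 2 * (δ / (16 * k ^ 3)) = δ / (2 * k) := by
      field_simp; ring
    calc (Fintype.card ι : ℝ) * (δ / (16 * k ^ 3))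
        ≤ 8 * (k:ℝ) ^ 2 * (δ / (16 * k ^ 3)) := by
          apply mul_le_mul_of_nonneg_right h1; positivity
      _ = δ / (2 * k) := h2
  have hmid : (1 + δ / 2) * α / k + δ / (2 * k) ≤ (1 + δ) * α / k := by
    rw [div_add_div _ _ (ne_of_gt hk0) (by positivity : (2:ℝ) * k ≠ 0),
      div_le_div_iff₀ (by positivity) hk0]
    have hδα : δ ≤ δ * α := le_mul_of_one_le_right hδ.le hα
    nlinarith [mul_le_mul_of_nonneg_right hδα (mul_pos hk0 hk0).le]
  calc ∑ j, ((SQ ∩ Rect (a j) (b j)).ncard : ℝ)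
      ≤ n * ((1 + δ / 2) * α / k + δ / (2 * k)) := by
        refine hsum.trans (mul_le_mul_of_nonneg_left (by linarith) hn.le)
    _ ≤ n * ((1 + δ) * α / k) := mul_le_mul_of_nonneg_left hmid hn.le
    _ = (1 + δ) * α * n / k := by ring
end
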